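/- For any language L ⊆ Γ^∞, its closure in the alphabetic topology satisfies closure(L) = ⋃_{A ⊆ Γ} (→(L/A^∞) ∩ A^im), where L/A^∞ = {u ∈ Γ* : uα ∈ L for some α ∈ A^∞} and →W = {α ∈ Γ^∞ : every prefix u of α extends to a prefix uv of α with uv ∈ W}. -/

import Mathlib

namespace InfWords

variable {Γ : Type}

/-- Finite and infinite words over `Γ`: `Γ^∞ = Γ* ∪ Γ^ω`. -/
abbrev Word (Γ : Type) := List Γ ⊕ (ℕ → Γ)

/-- Prepend a finite word to a finite or infinite word. -/
def wappend (u : List Γ) : Word Γ → Word Γ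
  | Sum.inl v => Sum.inl (u ++ v)
  | Sum.inr f => Sum.inr fun n => if h : n < u.length then u.get ⟨n, h⟩ else f (n - u.length)

/-- The set of finite words `Γ*` inside `Γ^∞`. -/
def finWords (Γ : Type) : Set (Word Γ) := Set.range Sum.inl

/-- The set of infinite words `Γ^ω` inside `Γ^∞`. -/
def infWords (Γ : Type) : Set (Word Γ) := Set.range Sum.inr

/-- The alphabet of a word: the letters occurring in it. -/
def alph : Word Γ → Set Γ
  | Sum.inl u => {a | a ∈ u}
  | Sum.inr f => {a | ∃ n, f n = a}

/-- The imaginary part: letters occurring infinitely often. -/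
def im : Word Γ → Set Γ
  | Sum.inl _ => ∅
  | Sum.inr f => {a | ∀ n, ∃ m, n ≤ m ∧ f m = a}

/-- `A^∞`: words all of whose letters lie in `A`. -/
def infin (A : Set Γ) : Set (Word Γ) := {α | alph α ⊆ A}

/-- The basic set `u A^∞` of the alphabetic topology. -/
def cone (u : List Γ) (A : Set Γ) : Set (Word Γ) := wappend u '' infin A

/-- The alphabetic topology on `Γ^∞`, generated by the sets `u A^∞`. -/
instance alphTop : TopologicalSpace (Word Γ) :=
  TopologicalSpace.generateFrom {S | ∃ u A, S = cone u A}

/-- `cpx A`: words with `alph = im = A`. -/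
def cpx (A : Set Γ) : Set (Word Γ) := {β | alph β = A ∧ im β = A}

/-- The strict alphabetic topology, generated by the sets `u · cpx A`. -/
def strictTopo (Γ : Type) : TopologicalSpace (Word Γ) :=
  TopologicalSpace.generateFrom {S | ∃ u A, S = wappend u '' cpx A}

/-- `u` is a finite prefix of the word `α`. -/
def IsPre (u : List Γ) : Word Γ → Prop
  | Sum.inl v => u <+: v
  | Sum.inr f => ∀ i : Fin u.length, u.get i = f i.1

/-- The arrow language `→W`: every prefix extends to a prefix lying in `W`. -/
def arrow (W : Set (List Γ)) : Set (Word Γ) :=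
  {α | ∀ u, IsPre u α → ∃ v, IsPre (u ++ v) α ∧ u ++ v ∈ W}

/-- The right quotient `L / A^∞`. -/
def quotInf (L : Set (Word Γ)) (A : Set Γ) : Set (List Γ) :=
  {u | ∃ β ∈ infin A, wappend u β ∈ L}

/-- `A^im`: words whose set of letters occurring infinitely often is exactly `A`. -/
def imSet (A : Set Γ) : Set (Word Γ) := {α | im α = A}

/-- `z^ω`, with the convention `1^ω = 1`. -/
def omegaPow : List Γ → Word Γ
  | [] => Sum.inl []
  | a :: l => Sum.inr fun n => (a :: l).get ⟨n % (a :: l).length, Nat.mod_lt n (Nat.succ_pos _)⟩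

/-- The partial products `u v₀ v₁ ⋯ v_{n-1}`. -/
def partialProd (u : List Γ) (v : ℕ → List Γ) (n : ℕ) : List Γ :=
  u ++ ((List.range n).map v).flatten

/-- `α` is the (finite or infinite) product `u v₀ v₁ v₂ ⋯`, with convention `1^ω = 1`. -/
def IsInfProd (u : List Γ) (v : ℕ → List Γ) : Word Γ → Prop
  | Sum.inl w => (∀ n, partialProd u v n <+: w) ∧ ∃ n, partialProd u v n = w
  | Sum.inr f => (∀ n, IsPre (partialProd u v n) (Sum.inr f)) ∧
      ∀ k, ∃ n, k < (partialProd u v n).length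

/-- `h : Γ* → M` is a monoid homomorphism. -/
structure IsHom {M : Type} [Monoid M] (h : List Γ → M) : Prop where
  map_one : h [] = 1
  map_mul : ∀ u v, h (u ++ v) = h u * h v

/-- `[s][e]^ω`: products `u v₀ v₁ ⋯` with `h u = s` and `h vᵢ = e`. -/
def pairSet {M : Type} (h : List Γ → M) (s e : M) : Set (Word Γ) :=
  {α | ∃ u v, h u = s ∧ (∀ i, h (v i) = e) ∧ IsInfProd u v α}

/-- `(s, e)` is a linked pair. -/
def LinkedPair {M : Type} [Monoid M] (s e : M) : Prop := s * e = s ∧ e * e = e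

/-- `h` strongly recognizes `L`. -/
def StronglyRecognizes {M : Type} [Monoid M] (h : List Γ → M) (L : Set (Word Γ)) : Prop :=
  L = ⋃ (s : M) (e : M) (_ : LinkedPair s e ∧ (pairSet h s e ∩ L).Nonempty), pairSet h s e

/-- `L` is regular: strongly recognized by a surjective homomorphism onto a finite monoid. -/
def Regular (L : Set (Word Γ)) : Prop :=
  ∃ (M : Type) (i : Monoid M), Finite M ∧
    ∃ h : List Γ → M, @IsHom Γ M i h ∧ Function.Surjective h ∧ @StronglyRecognizes Γ M i h L

/-- `L` is deterministic. -/
def Deterministic (L : Set (Word Γ)) : Prop :=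
  Regular L ∧ ∃ W : Set (List Γ), L ∩ infWords Γ = arrow W ∩ infWords Γ

/-- The syntactic preorder `u ≤_L v`. -/
def synLe (L : Set (Word Γ)) (u v : List Γ) : Prop :=
  ∀ x y z : List Γ,
    (wappend (x ++ v ++ y) (omegaPow z) ∈ L → wappend (x ++ u ++ y) (omegaPow z) ∈ L) ∧
    (wappend x (omegaPow (v ++ y)) ∈ L → wappend x (omegaPow (u ++ y)) ∈ L)

/-- The syntactic congruence `u ≡_L v`. -/
def synEq (L : Set (Word Γ)) (u v : List Γ) : Prop := synLe L u v ∧ synLe L v u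

/-- `[s][e]^ω` for syntactic classes represented by words `s`, `e`. -/
def pairSetSyn (L : Set (Word Γ)) (s e : List Γ) : Set (Word Γ) :=
  {α | ∃ u v, synEq L u s ∧ (∀ i, synEq L (v i) e) ∧ IsInfProd u v α}

/-- `s` represents an element of `M_e` in the syntactic monoid of `L`:
`s` is a product of words each of which is a factor of (something equivalent to) `e`. -/
def InMe (L : Set (Word Γ)) (e s : List Γ) : Prop :=
  ∃ parts : List (List Γ), s = parts.flatten ∧ ∀ p ∈ parts, ∃ x y, synEq L (x ++ p ++ y) e

/-- Glue a factorization `u₁ a₁ u₂ a₂ ⋯ u_k a_k` into a single finite word. -/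
def glue : List (List Γ) → List (Set Γ × Γ) → List Γ
  | x :: xs, p :: l => x ++ p.2 :: glue xs l
  | _, _ => []

/-- `(us, β)` is a factorization of `α` as `u₁ a₁ ⋯ u_k a_k β` with `uᵢ ∈ Aᵢ*`, `β ∈ B^∞`. -/
def IsFactorization (l : List (Set Γ × Γ)) (B : Set Γ) (us : List (List Γ)) (β : Word Γ)
    (α : Word Γ) : Prop :=
  us.length = l.length ∧
  (∀ (i : ℕ) (h1 : i < us.length) (h2 : i < l.length),
    ∀ c ∈ us.get ⟨i, h1⟩, c ∈ (l.get ⟨i, h2⟩).1) ∧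
  β ∈ infin B ∧ α = wappend (glue us l) β

/-- The monomial `A₁* a₁ ⋯ A_k* a_k B^∞`. -/
def monomial (l : List (Set Γ × Γ)) (B : Set Γ) : Set (Word Γ) :=
  {α | ∃ us β, IsFactorization l B us β α}

/-- The monomial given by `(l, B)` is unambiguous. -/
def Unambiguous (l : List (Set Γ × Γ)) (B : Set Γ) : Prop :=
  ∀ α us β us' β', IsFactorization l B us β α → IsFactorization l B us' β' α →
    us = us' ∧ β = β'

/-- `L` is a polynomial: a finite union of monomials. -/
def IsPolynomial (L : Set (Word Γ)) : Prop :=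
  ∃ ms : List (List (Set Γ × Γ) × Set Γ), L = {α | ∃ m ∈ ms, α ∈ monomial m.1 m.2}

/-- The set of marker letters of a monomial. -/
def sndSet (l : List (Set Γ × Γ)) : Set Γ := {a | ∃ p ∈ l, p.2 = a}

/-- `M_e`: the submonoid generated by the factors of the idempotent `e`. -/
def Msub {M : Type} [Monoid M] (e : M) : Submonoid M :=
  Submonoid.closure {t | ∃ x y, x * t * y = e}

/-- The variety `DA`: `ese = e` for all idempotents `e` and all `s ∈ M_e`. -/
def IsDA (M : Type) [Monoid M] : Prop :=
  ∀ e : M, e * e = e → ∀ s ∈ Msub e, e * s * e = e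

end InfWords

namespace InfWords

variable {Γ : Type}

lemma wappend_nil (α : Word Γ) : wappend ([] : List Γ) α = α := by
  cases α with
  | inl v => simp [wappend]
  | inr f => simp [wappend]

lemma wappend_append (u v : List Γ) (α : Word Γ) :
    wappend (u ++ v) α = wappend u (wappend v α) := by
  cases α with
  | inl w => simp [wappend]
  | inr f =>
    simp only [wappend, Sum.inr.injEq]
    funext n
    simp only [List.length_append]
    rcases lt_or_ge n u.length with h | h
    · rw [dif_pos (show n < u.length + v.length by omega), dif_pos h]
      simp [List.get_eq_getElem, List.getElem_append_left h]
    · rw [dif_neg (not_lt.2 h)]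
      rcases lt_or_ge n (u.length + v.length) with h2 | h2
      · rw [dif_pos h2, dif_pos (show n - u.length < v.length by omega)]
        simp only [List.get_eq_getElem]
        rw [List.getElem_append_right (by omega)]
      · rw [dif_neg (show ¬ n < u.length + v.length by omega),
          dif_neg (show ¬ n - u.length < v.length by omega)]
        congr 1
        omega

lemma isPre_wappend (u : List Γ) (α : Word Γ) : IsPre u (wappend u α) := by
  cases α with
  | inl v => exact ⟨v, rfl⟩
  | inr f =>
    intro i
    simp [wappend, IsPre, i.isLt]

lemma alph_wappend (u : List Γ) (α : Word Γ) :
    alph (wappend u α) = {a | a ∈ u} ∪ alph α := by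
  cases α with
  | inl v =>
    ext a; simp [wappend, alph]
  | inr f =>
    ext a
    simp only [wappend, alph, Set.mem_union, Set.mem_setOf_eq]
    constructor
    · rintro ⟨n, hn⟩
      by_cases h : n < u.length
      · rw [dif_pos h] at hn
        exact Or.inl (hn ▸ u.get_mem _)
      · rw [dif_neg h] at hn
        exact Or.inr ⟨n - u.length, hn⟩
    · rintro (h | ⟨n, hn⟩)
      · obtain ⟨i, hi⟩ := List.mem_iff_get.1 h
        exact ⟨i.1, by rw [dif_pos i.isLt]; exact hi⟩
      · exact ⟨n + u.length, by rw [dif_neg (by omega)]; simpa using hn⟩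

lemma im_wappend (u : List Γ) (α : Word Γ) : im (wappend u α) = im α := by
  cases α with
  | inl v => simp [wappend, im]
  | inr f =>
    ext a
    simp only [wappend, im, Set.mem_setOf_eq]
    constructor
    · intro h n
      obtain ⟨m, hm, he⟩ := h (n + u.length)
      rw [dif_neg (by omega)] at he
      exact ⟨m - u.length, by omega, he⟩
    · intro h n
      obtain ⟨m, hm, he⟩ := h n
      refine ⟨m + u.length, by omega, ?_⟩
      rw [dif_neg (by omega)]
      simpa using he

lemma im_subset_alph (α : Word Γ) : im α ⊆ alph α := by
  cases α with
  | inl v => simp [im]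
  | inr f =>
    intro a h
    obtain ⟨m, _, hm⟩ := h 0
    exact ⟨m, hm⟩

lemma wappend_left_cancel (u : List Γ) {α β : Word Γ}
    (h : wappend u α = wappend u β) : α = β := by
  cases α with
  | inl v =>
    cases β with
    | inl w =>
      simp only [wappend, Sum.inl.injEq, List.append_cancel_left_eq] at h
      exact h ▸ rfl
    | inr g => simp [wappend] at h
  | inr f =>
    cases β with
    | inl w => simp [wappend] at h
    | inr g =>
      simp only [wappend, Sum.inr.injEq] at h
      congr 1
      funext n
      have := congrFun h (n + u.length)
      rw [dif_neg (by omega), dif_neg (by omega)] at this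
      simpa using this

lemma isPre_cancel {u v : List Γ} {α : Word Γ} (h : IsPre (u ++ v) (wappend u α)) :
    IsPre v α := by
  cases α with
  | inl w =>
    have : u ++ v <+: u ++ w := h
    exact (List.prefix_append_right_inj u).1 this
  | inr f =>
    intro i
    have := h ⟨u.length + i.1, by simp only [List.length_append]; omega⟩
    simp only [wappend, List.get_eq_getElem] at this ⊢
    rw [List.getElem_append_right (by omega), dif_neg (by omega)] at this
    simpa using this

lemma isPre_prefix {u v : List Γ} {α : Word Γ} (hu : IsPre u α) (hv : IsPre v α)
    (h : u.length ≤ v.length) : u <+: v := by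
  cases α with
  | inl w => exact List.prefix_of_prefix_length_le hu hv h
  | inr f =>
    have huv : u = v.take u.length := by
      apply List.ext_getElem (by simp; omega)
      intro i h1 h2
      have e1 := hu ⟨i, h1⟩
      have e2 := hv ⟨i, by omega⟩
      simp only [List.get_eq_getElem] at e1 e2
      simp [List.getElem_take, e1, e2]
    exact huv ▸ List.take_prefix _ _

lemma mem_alph_of_isPre {u : List Γ} {α : Word Γ} (h : IsPre u α) {a : Γ} (ha : a ∈ u) :
    a ∈ alph α := by
  cases α with
  | inl v => exact h.subset ha
  | inr f =>
    obtain ⟨i, hi⟩ := List.mem_iff_get.1 ha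
    exact ⟨i.1, by rw [← h i]; exact hi⟩

lemma wappend_ofFn_shift (f : ℕ → Γ) (N : ℕ) :
    (Sum.inr f : Word Γ) =
      wappend (List.ofFn fun i : Fin N => f i.1) (Sum.inr fun n => f (n + N)) := by
  simp only [wappend, Sum.inr.injEq]
  funext n
  by_cases h : n < (List.ofFn fun i : Fin N => f i.1).length
  · rw [dif_pos h]
    simp [List.get_ofFn]
  · rw [dif_neg h]
    simp only [List.length_ofFn] at h ⊢
    congr 1
    omega

lemma isPre_ofFn (f : ℕ → Γ) (N : ℕ) :
    IsPre (List.ofFn fun i : Fin N => f i.1) (Sum.inr f : Word Γ) := by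
  intro i
  simp [List.get_ofFn]

lemma isOpen_cone (u : List Γ) (A : Set Γ) : IsOpen (cone u A) :=
  TopologicalSpace.GenerateOpen.basic _ ⟨u, A, rfl⟩

lemma cone_inter_aux {u u' : List Γ} {B B' : Set Γ} {x : Word Γ}
    (hx : x ∈ cone u B) (hx' : x ∈ cone u' B') (hle : u.length ≤ u'.length) :
    x ∈ cone u' (B ∩ B') ∧ cone u' (B ∩ B') ⊆ cone u B ∩ cone u' B' := by
  obtain ⟨β, hβ, rfl⟩ := hx
  obtain ⟨β', hβ', heq⟩ := hx'
  have hu : IsPre u (wappend u β) := isPre_wappend u β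
  have hu' : IsPre u' (wappend u β) := heq ▸ isPre_wappend u' β'
  obtain ⟨w, rfl⟩ := isPre_prefix hu hu' hle
  have hββ' : β = wappend w β' := by
    apply wappend_left_cancel u
    rw [← heq, wappend_append]
  have halphβ : alph β = {a | a ∈ w} ∪ alph β' := by rw [hββ', alph_wappend]
  have hwB : {a | a ∈ w} ⊆ B := fun a ha => hβ (halphβ ▸ Or.inl ha)
  have hβ'B : alph β' ⊆ B := fun a ha => hβ (halphβ ▸ Or.inr ha)
  constructor
  · exact ⟨β', fun a ha => ⟨hβ'B ha, hβ' ha⟩, heq⟩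
  · rintro γ ⟨δ, hδ, rfl⟩
    constructor
    · refine ⟨wappend w δ, ?_, (wappend_append u w δ).symm⟩
      show alph (wappend w δ) ⊆ B
      rw [alph_wappend]
      rintro a (ha | ha)
      · exact hwB ha
      · exact (hδ ha).1
    · exact ⟨δ, fun a ha => (hδ ha).2, rfl⟩

lemma isBasis_cone :
    TopologicalSpace.IsTopologicalBasis {S : Set (Word Γ) | ∃ u A, S = cone u A} := by
  refine ⟨?_, ?_, rfl⟩
  · rintro t₁ ⟨u, B, rfl⟩ t₂ ⟨u', B', rfl⟩ x ⟨hx, hx'⟩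
    rcases le_total u.length u'.length with hle | hle
    · obtain ⟨h1, h2⟩ := cone_inter_aux hx hx' hle
      exact ⟨cone u' (B ∩ B'), ⟨u', B ∩ B', rfl⟩, h1, h2⟩
    · obtain ⟨h1, h2⟩ := cone_inter_aux hx' hx hle
      exact ⟨cone u (B' ∩ B), ⟨u, B' ∩ B, rfl⟩, h1,
        fun γ hγ => ⟨(h2 hγ).2, (h2 hγ).1⟩⟩
  · apply Set.eq_univ_of_forall
    intro α
    exact ⟨cone [] Set.univ, ⟨[], Set.univ, rfl⟩,
      ⟨α, fun a _ => trivial, wappend_nil α⟩⟩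

lemma mem_closure_iff_cone {L : Set (Word Γ)} {α : Word Γ} :
    α ∈ closure L ↔ ∀ u A, α ∈ cone u A → (cone u A ∩ L).Nonempty := by
  rw [isBasis_cone.mem_closure_iff]
  constructor
  · intro h u A hα
    exact h (cone u A) ⟨u, A, rfl⟩ hα
  · rintro h o ⟨u, A, rfl⟩ hα
    exact h u A hα

end InfWords

open InfWords in
theorem closure_eq_arrow_quot (Γ : Type) [Fintype Γ] (L : Set (InfWords.Word Γ)) :
    closure L =
      ⋃ (A : Set Γ), (InfWords.arrow (InfWords.quotInf L A) ∩ InfWords.imSet A) := by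
  classical
  ext α
  rw [mem_closure_iff_cone]
  constructor
  · intro h
    refine Set.mem_iUnion.2 ⟨im α, ?_, rfl⟩
    intro u hu
    cases α with
    | inl wl =>
      obtain ⟨v, rfl⟩ := (hu : u <+: wl)
      have hc : (Sum.inl (u ++ v) : Word Γ) ∈ cone (u ++ v) (∅ : Set Γ) :=
        ⟨Sum.inl [], by simp [infin, alph], by simp [wappend]⟩
      obtain ⟨γ, ⟨β, hβ, rfl⟩, hL⟩ := h (u ++ v) ∅ hc
      exact ⟨v, List.prefix_rfl, β, hβ, hL⟩
    | inr f =>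
      set A := im (Sum.inr f : Word Γ) with hA
      have hbound : ∀ a : Γ, a ∉ A → ∃ n, ∀ m, n ≤ m → f m ≠ a := by
        intro a ha
        by_contra hc
        push_neg at hc
        exact ha hc
      let g : Γ → ℕ := fun a => if h : a ∈ A then 0 else (hbound a h).choose
      set N := max (Finset.univ.sup g) u.length with hN
      have hfA : ∀ m, Finset.univ.sup g ≤ m → f m ∈ A := by
        intro m hm
        by_contra hfa
        have h1 : g (f m) ≤ Finset.univ.sup g := Finset.le_sup (Finset.mem_univ _)
        have hg : g (f m) = (hbound (f m) hfa).choose := dif_neg hfa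
        exact (hbound (f m) hfa).choose_spec m (by omega) rfl
      set w := (List.ofFn fun i : Fin N => f i.1) with hw
      have hwlen : w.length = N := by simp [hw]
      have hpw : IsPre w (Sum.inr f : Word Γ) := isPre_ofFn f N
      have huw : u <+: w := isPre_prefix hu hpw (by rw [hwlen]; exact le_max_right _ _)
      have hmem : (Sum.inr f : Word Γ) ∈ cone w A := by
        refine ⟨Sum.inr fun n => f (n + N), ?_, ?_⟩
        · rintro a ⟨n, rfl⟩
          exact hfA (n + N) (le_trans (le_max_left _ _) (Nat.le_add_left _ _))
        · exact (wappend_ofFn_shift f N).symm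
      obtain ⟨γ, ⟨β, hβ, rfl⟩, hL⟩ := h w A hmem
      obtain ⟨v, hv⟩ := huw
      refine ⟨v, ?_, ?_⟩
      · rw [hv]; exact hpw
      · show u ++ v ∈ quotInf L A
        rw [hv]; exact ⟨β, hβ, hL⟩
  · intro h u B hc
    obtain ⟨A, hA⟩ := Set.mem_iUnion.1 h
    obtain ⟨harr, him⟩ := hA
    obtain ⟨β, hβ, hαeq⟩ := hc
    have him' : im α = A := him
    have hpre : IsPre u α := hαeq ▸ isPre_wappend u β
    obtain ⟨v, hpre2, δ, hδ, hLδ⟩ := harr u hpre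
    refine ⟨wappend (u ++ v) δ, ⟨wappend v δ, ?_, (wappend_append u v δ).symm⟩, hLδ⟩
    show alph (wappend v δ) ⊆ B
    rw [alph_wappend]
    rintro a (ha | ha)
    · have hpre3 : IsPre (u ++ v) (wappend u β) := hαeq ▸ hpre2
      exact hβ (mem_alph_of_isPre (isPre_cancel hpre3) ha)
    · have h1 : a ∈ A := hδ ha
      rw [← hαeq, im_wappend] at him'
      have : a ∈ im β := by rw [him']; exact h1
      exact hβ (im_subset_alph β this)
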